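/- Let G be a group and f ∈ G. Then f is conjugate to f⁻¹ in G if and only if there exist g, h ∈ G with g² = h² and f = g⁻¹h. -/
import Mathlib

theorem stmt_2 {G : Type*} [Group G] (f : G) :
    IsConj f f⁻¹ ↔ ∃ g h : G, g ^ 2 = h ^ 2 ∧ f = g⁻¹ * h := by
  rw [isConj_iff]
  constructor
  · rintro ⟨c, hc⟩
    have hc' : c * f = f⁻¹ * c := by
      rw [← hc]; group
    refine ⟨c, c * f, ?_, by group⟩
    have h1 : f * (c * f) = c := by rw [hc']; group
    calc c ^ 2 = c * c := pow_two c
      _ = c * (f * (c * f)) := by rw [h1]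
      _ = (c * f) ^ 2 := by rw [pow_two, mul_assoc]
  · rintro ⟨g, h, hgh, rfl⟩
    have hgh' : g * g = h * h := by rw [← pow_two, ← pow_two, hgh]
    refine ⟨g, ?_⟩
    have key : h * (h⁻¹ * g * g) = h * h := by
      rw [← mul_assoc, ← mul_assoc, mul_inv_cancel, one_mul, hgh']
    have key2 : h⁻¹ * g * g = h := mul_left_cancel key
    calc g * (g⁻¹ * h) * g⁻¹ = h * g⁻¹ := by group
      _ = (h⁻¹ * g * g) * g⁻¹ := by rw [key2]
      _ = h⁻¹ * g := by rw [mul_assoc, mul_inv_cancel, mul_one]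
      _ = (g⁻¹ * h)⁻¹ := by rw [mul_inv_rev, inv_inv]
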